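/- Let p, q, r be real numbers with 0 ≤ p, 1 ≤ q, 0 ≤ r and p + r ≤ (1 + r)·q. Then for every real x with 0 < x, one has x^((1 + r - (p+r)/q)/2) · (x^p - 1) · (x^((p+r)/q) - 1) ≤ (p/q) · (x^(p+r) - 1) · (x - 1). -/

import Mathlib

open Real Set

/-- sinh t ≤ t * cosh t for t ≥ 0 -/
lemma aux_sinh_le_mul_cosh (t : ℝ) (ht : 0 ≤ t) : Real.sinh t ≤ t * Real.cosh t := by
  have key : Monotone (fun t : ℝ => t * Real.cosh t - Real.sinh t) := by
    apply monotone_of_hasDerivAt_nonneg (f' := fun t => t * Real.sinh t)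
    · intro x
      have h1 : HasDerivAt (fun t : ℝ => t * Real.cosh t)
          (1 * Real.cosh x + x * Real.sinh x) x :=
        (hasDerivAt_id x).mul (Real.hasDerivAt_cosh x)
      have h2 := h1.sub (Real.hasDerivAt_sinh x)
      exact h2.congr_deriv (by ring)
    · intro x
      show (0:ℝ) ≤ x * Real.sinh x
      rcases le_or_gt 0 x with h | h
      · exact mul_nonneg h (Real.sinh_nonneg_iff.mpr h)
      · nlinarith [Real.sinh_nonpos_iff.mpr h.le]
  have := key ht
  simp only [Real.sinh_zero, Real.cosh_zero, zero_mul, mul_one, sub_zero, zero_sub, neg_zero] at this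
  linarith

/-- The key function: G t = log (sinh (t*u)) - log t. -/
noncomputable def Gfun (u : ℝ) : ℝ → ℝ := fun t => Real.log (Real.sinh (t * u)) - Real.log t

lemma Gfun_hasDerivAt {u : ℝ} (hu : 0 < u) {t : ℝ} (ht : 0 < t) :
    HasDerivAt (Gfun u) (u * Real.cosh (t * u) / Real.sinh (t * u) - 1 / t) t := by
  have hs : 0 < Real.sinh (t * u) := Real.sinh_pos_iff.mpr (mul_pos ht hu)
  have h1 : HasDerivAt (fun t : ℝ => Real.sinh (t * u)) (Real.cosh (t * u) * u) t :=
    by simpa [Function.comp_def] using (Real.hasDerivAt_sinh (t * u)).comp t ((hasDerivAt_id t).mul_const u)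
  have h2 : HasDerivAt (fun t : ℝ => Real.log (Real.sinh (t * u)))
      (Real.cosh (t * u) * u / Real.sinh (t * u)) t := h1.log hs.ne'
  have h3 := h2.sub (Real.hasDerivAt_log ht.ne')
  have : Real.cosh (t * u) * u / Real.sinh (t * u) - t⁻¹
      = u * Real.cosh (t * u) / Real.sinh (t * u) - 1 / t := by
    rw [one_div]; ring_nf
  rw [← this]
  exact h3

lemma Gderiv_hasDerivAt {u : ℝ} (hu : 0 < u) {t : ℝ} (ht : 0 < t) :
    HasDerivAt (fun t => u * Real.cosh (t * u) / Real.sinh (t * u) - 1 / t)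
      (1 / t ^ 2 - u ^ 2 / Real.sinh (t * u) ^ 2) t := by
  have hs : 0 < Real.sinh (t * u) := Real.sinh_pos_iff.mpr (mul_pos ht hu)
  have hc : HasDerivAt (fun t : ℝ => Real.cosh (t * u)) (Real.sinh (t * u) * u) t :=
    by simpa [Function.comp_def] using (Real.hasDerivAt_cosh (t * u)).comp t ((hasDerivAt_id t).mul_const u)
  have hsd : HasDerivAt (fun t : ℝ => Real.sinh (t * u)) (Real.cosh (t * u) * u) t :=
    by simpa [Function.comp_def] using (Real.hasDerivAt_sinh (t * u)).comp t ((hasDerivAt_id t).mul_const u)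
  have h1 : HasDerivAt (fun t : ℝ => u * Real.cosh (t * u) / Real.sinh (t * u))
      ((u * (Real.sinh (t * u) * u) * Real.sinh (t * u) -
        u * Real.cosh (t * u) * (Real.cosh (t * u) * u)) / Real.sinh (t * u) ^ 2) t :=
    (hc.const_mul u).div hsd hs.ne'
  have h2 : HasDerivAt (fun t : ℝ => 1 / t) (-(1 / t ^ 2)) t := by
    have := hasDerivAt_inv ht.ne'
    simpa [one_div] using this
  have h3 := h1.sub h2
  have hcs : Real.cosh (t * u) ^ 2 - Real.sinh (t * u) ^ 2 = 1 :=
    Real.cosh_sq_sub_sinh_sq (t * u)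
  have hnum : u * (Real.sinh (t * u) * u) * Real.sinh (t * u) -
      u * Real.cosh (t * u) * (Real.cosh (t * u) * u) = -u ^ 2 := by
    linear_combination (-(u ^ 2)) * hcs
  refine h3.congr_deriv ?_
  rw [hnum]
  ring

/-- Monotonicity of G on (0, ∞). -/
lemma Gfun_monotoneOn {u : ℝ} (hu : 0 < u) : MonotoneOn (Gfun u) (Ioi 0) := by
  apply monotoneOn_of_hasDerivWithinAt_nonneg (convex_Ioi 0)
    (f' := fun t => u * Real.cosh (t * u) / Real.sinh (t * u) - 1 / t)
  · intro t ht
    exact ((Gfun_hasDerivAt hu ht).continuousAt).continuousWithinAt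
  · intro t ht
    rw [interior_Ioi] at ht
    exact (Gfun_hasDerivAt hu ht).hasDerivWithinAt
  · intro t ht
    rw [interior_Ioi] at ht
    have ht' : (0:ℝ) < t := ht
    have hs : 0 < Real.sinh (t * u) := Real.sinh_pos_iff.mpr (mul_pos ht' hu)
    have key := aux_sinh_le_mul_cosh (t * u) (mul_pos ht' hu).le
    rw [sub_nonneg, div_le_div_iff₀ ht' hs]
    calc 1 * Real.sinh (t * u) = Real.sinh (t * u) := one_mul _
      _ ≤ t * u * Real.cosh (t * u) := key
      _ = u * Real.cosh (t * u) * t := by ring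

/-- Convexity of G on (0, ∞). -/
lemma Gfun_convexOn {u : ℝ} (hu : 0 < u) : ConvexOn ℝ (Ioi 0) (Gfun u) := by
  apply convexOn_of_hasDerivWithinAt2_nonneg (convex_Ioi 0)
    (f' := fun t => u * Real.cosh (t * u) / Real.sinh (t * u) - 1 / t)
    (f'' := fun t => 1 / t ^ 2 - u ^ 2 / Real.sinh (t * u) ^ 2)
  · intro t ht
    exact ((Gfun_hasDerivAt hu ht).continuousAt).continuousWithinAt
  · intro t ht
    rw [interior_Ioi] at ht
    exact (Gfun_hasDerivAt hu ht).hasDerivWithinAt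
  · intro t ht
    rw [interior_Ioi] at ht
    exact (Gderiv_hasDerivAt hu ht).hasDerivWithinAt
  · intro t ht
    rw [interior_Ioi] at ht
    have ht' : (0:ℝ) < t := ht
    have htu : 0 < t * u := mul_pos ht' hu
    have hs : t * u < Real.sinh (t * u) := Real.self_lt_sinh_iff.mpr htu
    rw [sub_nonneg, div_le_div_iff₀ (by positivity) (by positivity)]
    calc u ^ 2 * t ^ 2 = (t * u) ^ 2 := by ring
      _ ≤ Real.sinh (t * u) ^ 2 := by nlinarith
      _ = 1 * Real.sinh (t * u) ^ 2 := (one_mul _).symm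

/-- The pair inequality: G a + G b ≤ G c + G 1 under the combinatorial hypotheses. -/
lemma Gfun_pair {u : ℝ} (hu : 0 < u) {a b c : ℝ} (ha : 0 < a) (hb : 0 < b)
    (hac : a ≤ c) (hbc : b ≤ c) (hsum : a + b ≤ c + 1) :
    Gfun u a + Gfun u b ≤ Gfun u c + Gfun u 1 := by
  have hmono := Gfun_monotoneOn hu
  have hconv := Gfun_convexOn hu
  have hc : (0:ℝ) < c := lt_of_lt_of_le ha hac
  -- wlog b ≤ a
  wlog hba : b ≤ a generalizing a b
  · have := this hb ha hbc hac (by linarith) (le_of_not_ge hba)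
    linarith
  rcases le_or_gt a 1 with h1 | h1
  · -- both a, b ≤ 1 : use monotonicity twice
    have e1 : Gfun u a ≤ Gfun u 1 := hmono (mem_Ioi.mpr ha) (mem_Ioi.mpr one_pos) h1
    have e2 : Gfun u b ≤ Gfun u c := hmono (mem_Ioi.mpr hb) (mem_Ioi.mpr hc) hbc
    linarith
  · -- a > 1
    set b' : ℝ := c + 1 - a with hb'def
    have hb'1 : 1 ≤ b' := by simp [hb'def]; linarith
    have hb'pos : (0:ℝ) < b' := by linarith
    have hbb' : b ≤ b' := by simp [hb'def]; linarith
    have e0 : Gfun u b ≤ Gfun u b' := hmono (mem_Ioi.mpr hb) (mem_Ioi.mpr hb'pos) hbb'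
    rcases eq_or_lt_of_le (le_trans h1.le hac) with hc1 | hc1
    · -- c = 1, then a = 1
      have hac1 : a = 1 := le_antisymm (hac.trans hc1.symm.le) h1.le
      have e1 : Gfun u a = Gfun u 1 := by rw [hac1]
      have e2 : Gfun u b ≤ Gfun u c := hmono (mem_Ioi.mpr hb) (mem_Ioi.mpr hc) hbc
      rw [e1]; linarith
    · -- 1 < c
      set l : ℝ := (a - 1) / (c - 1) with hldef
      have hc1' : (0:ℝ) < c - 1 := by linarith
      have hl0 : 0 ≤ l := div_nonneg (by linarith) hc1'.le
      have hl1 : l ≤ 1 := by rw [div_le_one hc1']; linarith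
      have hl0' : 0 ≤ 1 - l := by linarith
      have hl : l * (c - 1) = a - 1 := by
        rw [hldef]; exact div_mul_cancel₀ _ hc1'.ne'
      have hcomb1 : (1 - l) * 1 + l * c = a := by nlinarith [hl]
      have hcomb2 : l * 1 + (1 - l) * c = b' := by
        rw [hb'def]; nlinarith [hl]
      have c1 := hconv.2 (mem_Ioi.mpr one_pos) (mem_Ioi.mpr hc) hl0' hl0 (by ring)
      have c2 := hconv.2 (mem_Ioi.mpr one_pos) (mem_Ioi.mpr hc) hl0 hl0' (by ring)
      simp only [smul_eq_mul] at c1 c2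
      rw [hcomb1] at c1
      rw [hcomb2] at c2
      linarith

/-- Core sinh inequality for u ≥ 0. -/
lemma core_sinh_nonneg (p q r : ℝ) (hp : 0 ≤ p) (hq : 1 ≤ q) (hr : 0 ≤ r)
    (hpqr : p + r ≤ (1 + r) * q) (u : ℝ) (hu : 0 ≤ u) :
    Real.sinh (p * u) * Real.sinh ((p + r) / q * u) ≤
      p / q * (Real.sinh ((p + r) * u) * Real.sinh u) := by
  have hq0 : (0:ℝ) < q := lt_of_lt_of_le one_pos hq
  rcases eq_or_lt_of_le hp with hp0 | hp0
  · simp [← hp0]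
  rcases eq_or_lt_of_le hu with hu0 | hu0
  · simp [← hu0]
  -- main case : p > 0, u > 0
  set s : ℝ := (p + r) / q with hsdef
  set c : ℝ := p + r with hcdef
  have hcpos : 0 < c := by positivity
  have hspos : 0 < s := by positivity
  have hsc : s ≤ c := by
    rw [hsdef]; exact div_le_self hcpos.le hq
  have hs1r : s ≤ 1 + r := by
    rw [hsdef, div_le_iff₀ hq0]; linarith
  have hpc : p ≤ c := by simp [hcdef]; linarith
  have hsum : p + s ≤ c + 1 := by simp [hcdef]; linarith
  have key := Gfun_pair hu0 hp0 hspos hpc hsc hsum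
  -- unfold G and exponentiate
  have hsp : 0 < Real.sinh (p * u) := Real.sinh_pos_iff.mpr (by positivity)
  have hss : 0 < Real.sinh (s * u) := Real.sinh_pos_iff.mpr (by positivity)
  have hsc' : 0 < Real.sinh (c * u) := Real.sinh_pos_iff.mpr (by positivity)
  have hsu : 0 < Real.sinh u := Real.sinh_pos_iff.mpr hu0
  simp only [Gfun, one_mul, Real.log_one, sub_zero] at key
  have key2 : Real.log (Real.sinh (p * u) * Real.sinh (s * u) * c) ≤
      Real.log (Real.sinh (c * u) * Real.sinh u * (p * s)) := by
    rw [Real.log_mul (by positivity) hcpos.ne', Real.log_mul hsp.ne' hss.ne',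
      Real.log_mul (by positivity) (by positivity), Real.log_mul hsc'.ne' hsu.ne',
      Real.log_mul hp0.ne' hspos.ne']
    linarith
  have key3 : Real.sinh (p * u) * Real.sinh (s * u) * c ≤
      Real.sinh (c * u) * Real.sinh u * (p * s) := by
    have := Real.exp_le_exp.mpr key2
    rwa [Real.exp_log (by positivity), Real.exp_log (by positivity)] at this
  have hps : p / q = p * s / c := by
    rw [hsdef, hcdef]; field_simp
  calc Real.sinh (p * u) * Real.sinh (s * u)
      = Real.sinh (p * u) * Real.sinh (s * u) * c / c := by
        field_simp
    _ ≤ Real.sinh (c * u) * Real.sinh u * (p * s) / c :=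
        (div_le_div_iff_of_pos_right hcpos).mpr key3
    _ = p / q * (Real.sinh (c * u) * Real.sinh u) := by
        rw [hps]; field_simp

/-- Core sinh inequality for all u. -/
lemma core_sinh (p q r : ℝ) (hp : 0 ≤ p) (hq : 1 ≤ q) (hr : 0 ≤ r)
    (hpqr : p + r ≤ (1 + r) * q) (u : ℝ) :
    Real.sinh (p * u) * Real.sinh ((p + r) / q * u) ≤
      p / q * (Real.sinh ((p + r) * u) * Real.sinh u) := by
  rcases le_or_gt 0 u with hu | hu
  · exact core_sinh_nonneg p q r hp hq hr hpqr u hu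
  · have := core_sinh_nonneg p q r hp hq hr hpqr (-u) (by linarith)
    simpa [mul_neg, Real.sinh_neg, neg_mul, neg_neg, mul_comm] using this

theorem stmt_0 (p q r : ℝ) (hp : 0 ≤ p) (hq : 1 ≤ q) (hr : 0 ≤ r)
    (hpqr : p + r ≤ (1 + r) * q) (x : ℝ) (hx : 0 < x) :
    x ^ ((1 + r - (p + r) / q) / 2) * (x ^ p - 1) * (x ^ ((p + r) / q) - 1) ≤
      p / q * (x ^ (p + r) - 1) * (x - 1) := by
  set u : ℝ := Real.log x / 2 with hudef
  have hfact : ∀ a : ℝ, x ^ a - 1 = 2 * Real.exp (a * u) * Real.sinh (a * u) := by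
    intro a
    rw [Real.rpow_def_of_pos hx, Real.sinh_eq]
    have h1 : Real.exp (Real.log x * a) = Real.exp (a * u) * Real.exp (a * u) := by
      rw [← Real.exp_add]; congr 1; rw [hudef]; ring
    have h2 : Real.exp (a * u) * Real.exp (-(a * u)) = 1 := by
      rw [← Real.exp_add]; simp
    linear_combination h1 + h2
  have hx1 : x - 1 = 2 * Real.exp u * Real.sinh u := by
    have := hfact 1
    rwa [Real.rpow_one, one_mul] at this
  have hxpow : x ^ ((1 + r - (p + r) / q) / 2) =
      Real.exp ((1 + r - (p + r) / q) * u) := by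
    rw [Real.rpow_def_of_pos hx]; congr 1; rw [hudef]; ring
  rw [hfact p, hfact ((p + r) / q), hfact (p + r), hx1, hxpow]
  have core := core_sinh p q r hp hq hr hpqr u
  have e1 : Real.exp ((1 + r - (p + r) / q) * u) * Real.exp (p * u) *
      Real.exp ((p + r) / q * u) = Real.exp ((1 + r + p) * u) := by
    rw [← Real.exp_add, ← Real.exp_add]; congr 1; ring
  have e2 : Real.exp ((p + r) * u) * Real.exp u = Real.exp ((1 + r + p) * u) := by
    rw [← Real.exp_add]; congr 1; ring
  calc Real.exp ((1 + r - (p + r) / q) * u) * (2 * Real.exp (p * u) * Real.sinh (p * u)) *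
        (2 * Real.exp ((p + r) / q * u) * Real.sinh ((p + r) / q * u))
      = 4 * (Real.exp ((1 + r - (p + r) / q) * u) * Real.exp (p * u) *
          Real.exp ((p + r) / q * u)) *
          (Real.sinh (p * u) * Real.sinh ((p + r) / q * u)) := by ring
    _ = 4 * Real.exp ((1 + r + p) * u) *
          (Real.sinh (p * u) * Real.sinh ((p + r) / q * u)) := by rw [e1]
    _ ≤ 4 * Real.exp ((1 + r + p) * u) *
          (p / q * (Real.sinh ((p + r) * u) * Real.sinh u)) := by
        exact mul_le_mul_of_nonneg_left core (by positivity)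
    _ = p / q * (2 * Real.exp ((p + r) * u) * Real.sinh ((p + r) * u)) *
          (2 * Real.exp u * Real.sinh u) := by
        rw [← e2]; ring
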